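/- Let R be a strongly ℤ-graded ring with non-negative part P, let A be a k×k matrix over R, let m ∈ ℤ be suitable for A, and let n > m. Then the cokernel of μ(A,n) is a finitely generated projective R_0-module if and only if the cokernel of μ(A,m) is a finitely generated projective R_0-module (both cokernels regarded as R_0-modules by restriction of scalars along R_0 ⊆ P). -/
import Mathlib

open DirectSum CategoryTheory
universe u
section GradedPreamble

/-- A partition of unity of type `(n, -n)` in the `ℤ`-graded ring `R`:
a finite family `α₁, …, α_N ∈ R_n`, `β₁, …, β_N ∈ R_{-n}` with `∑ j, α j * β j = 1`. -/
def HasPartitionOfUnity {R : Type u} [Ring R] (𝒜 : ℤ → AddSubgroup R) (n : ℤ) : Prop :=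
  ∃ (N : ℕ) (α β : Fin N → R),
    (∀ j, α j ∈ 𝒜 n) ∧ (∀ j, β j ∈ 𝒜 (-n)) ∧ ∑ j, α j * β j = 1
open DirectSum CategoryTheory

variable {R : Type u} [Ring R] (𝒜 : ℤ → AddSubgroup R) [GradedRing 𝒜]

noncomputable def comp' (i : ℤ) : R →+ R :=
  ((𝒜 i).subtype).comp ((DFinsupp.evalAddMonoidHom i).comp
    (DirectSum.decomposeAddEquiv 𝒜).toAddMonoidHom)

lemma comp'_apply (i : ℤ) (x : R) : comp' 𝒜 i x = (DirectSum.decompose 𝒜 x i : R) := rfl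

theorem decompose_mul_vanish {a b : R} {c d : ℤ}
    (ha : ∀ i : ℤ, i < c → (DirectSum.decompose 𝒜 a i : R) = 0)
    (hb : ∀ i : ℤ, i < d → (DirectSum.decompose 𝒜 b i : R) = 0) :
    ∀ i : ℤ, i < c + d → (DirectSum.decompose 𝒜 (a * b) i : R) = 0 := by
  classical
  intro i hi
  have hae := (DirectSum.sum_support_decompose 𝒜 a).symm
  have hbe := (DirectSum.sum_support_decompose 𝒜 b).symm
  rw [← comp'_apply]
  conv_lhs => rw [hae, hbe]
  rw [Finset.sum_mul_sum]
  rw [map_sum]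
  refine Finset.sum_eq_zero ?_
  intro j hj
  rw [map_sum]
  refine Finset.sum_eq_zero ?_
  intro k hk
  rw [comp'_apply]
  have hjc : c ≤ j := by
    by_contra h
    push_neg at h
    exact (DFinsupp.mem_support_iff.mp hj) (Subtype.ext (ha j h))
  have hkd : d ≤ k := by
    by_contra h
    push_neg at h
    exact (DFinsupp.mem_support_iff.mp hk) (Subtype.ext (hb k h))
  have hmem : ((DirectSum.decompose 𝒜 a j : R) * (DirectSum.decompose 𝒜 b k : R)) ∈ 𝒜 (j + k) :=
    SetLike.mul_mem_graded (SetLike.coe_mem _) (SetLike.coe_mem _)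
  exact DirectSum.decompose_of_mem_ne 𝒜 hmem (by omega)

/-- The degree-zero subring `R₀ = R_0` of the `ℤ`-graded ring `R`. -/
def gradeZeroSubring : Subring R where
  carrier := 𝒜 0
  zero_mem' := zero_mem _
  one_mem' := SetLike.one_mem_graded 𝒜
  add_mem' := fun ha hb => add_mem ha hb
  neg_mem' := fun ha => neg_mem ha
  mul_mem' := fun ha hb => by simpa using SetLike.mul_mem_graded ha hb

/-- The non-negative part `P = ⨁_{k ≥ 0} R_k` of the `ℤ`-graded ring `R`:
the subring of elements whose homogeneous components in all negative degrees vanish. -/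
def nonnegSubring : Subring R where
  carrier := {x | ∀ i : ℤ, i < 0 → (DirectSum.decompose 𝒜 x i : R) = 0}
  zero_mem' := by intro i hi; simp
  one_mem' := by
    intro i hi
    exact DirectSum.decompose_of_mem_ne 𝒜 (SetLike.one_mem_graded 𝒜) (by omega)
  add_mem' := by intro a b ha hb i hi; rw [DirectSum.decompose_add]; simp [ha i hi, hb i hi]
  neg_mem' := by
    intro a ha i hi
    rw [DirectSum.decompose_neg, DFinsupp.neg_apply]
    push_cast [ha i hi]
    simp
  mul_mem' := by
    intro a b ha hb i hi
    exact decompose_mul_vanish 𝒜 ha hb i (by omega)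

/-- `T_m = ⨁_{k ≥ -m} R_k`, the left `R₀`-submodule of `R` of all elements whose
homogeneous components in degrees `< -m` vanish. -/
def trunc (m : ℤ) : Submodule ↥(gradeZeroSubring 𝒜) R where
  carrier := {x | ∀ i : ℤ, i < -m → (DirectSum.decompose 𝒜 x i : R) = 0}
  zero_mem' := by intro i hi; simp
  add_mem' := by intro a b ha hb i hi; rw [DirectSum.decompose_add]; simp [ha i hi, hb i hi]
  smul_mem' := by
    intro c x hx i hi
    have hc : ∀ i : ℤ, i < 0 → (DirectSum.decompose 𝒜 (c : R) i : R) = 0 := by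
      intro i hi
      exact DirectSum.decompose_of_mem_ne 𝒜 c.2 (by omega)
    have : (c • x : R) = (c : R) * x := rfl
    rw [this]
    exact decompose_mul_vanish 𝒜 hc hx i (by omega)

lemma mem_trunc {m : ℤ} {x : R} :
    x ∈ trunc 𝒜 m ↔ ∀ i : ℤ, i < -m → (DirectSum.decompose 𝒜 x i : R) = 0 := Iff.rfl

/-- The left multiplication map `μ(A, m) : P^k → (T_m)^k`, `v ↦ v·A`, associated with a
`k × k` matrix `A` over `R` all of whose entries have vanishing homogeneous components
in degrees `< -m`. -/
noncomputable def muMap (k : ℕ) (A : Matrix (Fin k) (Fin k) R) (m : ℤ)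
    (hA : ∀ i j, A i j ∈ trunc 𝒜 m) :
    (Fin k → ↥(trunc 𝒜 0)) →ₗ[↥(gradeZeroSubring 𝒜)] (Fin k → ↥(trunc 𝒜 m)) where
  toFun v := fun j => ⟨∑ i, (v i : R) * A i j, by
    refine sum_mem ?_
    intro i _
    intro d hd
    exact decompose_mul_vanish 𝒜 (c := 0) (d := -m) (fun e he => (v i).2 e (by omega)) (hA i j) d (by omega)⟩
  map_add' v w := by
    funext j
    apply Subtype.ext
    simp [add_mul, Finset.sum_add_distrib]
  map_smul' c v := by
    funext j
    apply Subtype.ext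
    simp only [RingHom.id_apply, Pi.smul_apply]
    have hs : ∀ r : R, c • r = (c : R) * r := fun r => rfl
    simp [hs, Finset.mul_sum, mul_assoc]
end GradedPreamble

section Aux
open DirectSum

variable {R : Type u} [Ring R] (𝒜 : ℤ → AddSubgroup R) [GradedRing 𝒜]

lemma decompose_grade_zero_mul (c : ↥(gradeZeroSubring 𝒜)) (x : R) (i : ℤ) :
    (DirectSum.decompose 𝒜 ((c : R) * x) i : R) = (c : R) * (DirectSum.decompose 𝒜 x i : R) := by
  have h := DirectSum.coe_decompose_mul_add_of_left_mem 𝒜 (i := 0) (j := i)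
    (a := (c : R)) (b := x) (show (c : R) ∈ 𝒜 0 from c.2)
  rwa [zero_add] at h

/-- The degree-`d` part as an `R₀`-submodule of `R`. -/
def gradeSubmodule (d : ℤ) : Submodule ↥(gradeZeroSubring 𝒜) R where
  carrier := 𝒜 d
  add_mem' := fun ha hb => add_mem ha hb
  zero_mem' := zero_mem _
  smul_mem' := by
    intro c x hx
    show (c : R) * x ∈ 𝒜 d
    have h := SetLike.mul_mem_graded (show (c : R) ∈ 𝒜 0 from c.2) hx
    rwa [zero_add] at h

theorem grade_finite_projective (hstrong : ∀ n : ℤ, HasPartitionOfUnity 𝒜 n) (d : ℤ) :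
    Module.Finite ↥(gradeZeroSubring 𝒜) ↥(gradeSubmodule 𝒜 d) ∧
      Module.Projective ↥(gradeZeroSubring 𝒜) ↥(gradeSubmodule 𝒜 d) := by
  obtain ⟨N, α, β, hα, hβ, h1⟩ := hstrong (-d)
  rw [neg_neg] at hβ
  let f : ↥(gradeSubmodule 𝒜 d) →ₗ[↥(gradeZeroSubring 𝒜)] (Fin N → ↥(gradeZeroSubring 𝒜)) :=
  { toFun := fun x j => ⟨(x : R) * α j, by
      have h := SetLike.mul_mem_graded (show (x : R) ∈ 𝒜 d from x.2) (hα j)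
      have e : d + -d = 0 := by ring
      exact show _ ∈ 𝒜 0 from e ▸ h⟩
    map_add' := by
      intro x y; funext j; apply Subtype.ext
      show ((x : R) + (y : R)) * α j = (x : R) * α j + (y : R) * α j
      rw [add_mul]
    map_smul' := by
      intro c x; funext j; apply Subtype.ext
      show ((c : R) * (x : R)) * α j = (c : R) * ((x : R) * α j)
      rw [mul_assoc] }
  let g : (Fin N → ↥(gradeZeroSubring 𝒜)) →ₗ[↥(gradeZeroSubring 𝒜)] ↥(gradeSubmodule 𝒜 d) :=
  { toFun := fun c => ⟨∑ j, (c j : R) * β j, by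
      refine sum_mem ?_
      intro j _
      have h := SetLike.mul_mem_graded (show ((c j : R)) ∈ 𝒜 0 from (c j).2) (hβ j)
      rwa [zero_add] at h⟩
    map_add' := by
      intro a b; apply Subtype.ext
      show ∑ j, ((a j : R) + (b j : R)) * β j = (∑ j, (a j : R) * β j) + ∑ j, (b j : R) * β j
      rw [← Finset.sum_add_distrib]
      exact Finset.sum_congr rfl fun j _ => add_mul _ _ _
    map_smul' := by
      intro r c; apply Subtype.ext
      show ∑ j, ((r : R) * (c j : R)) * β j = (r : R) * ∑ j, (c j : R) * β j
      rw [Finset.mul_sum]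
      exact Finset.sum_congr rfl fun j _ => mul_assoc _ _ _ }
  have hgf : ∀ x, g (f x) = x := by
    intro x
    apply Subtype.ext
    show ∑ j, ((x : R) * α j) * β j = (x : R)
    simp_rw [mul_assoc, ← Finset.mul_sum, h1, mul_one]
  constructor
  · exact Module.Finite.of_surjective g (fun x => ⟨f x, hgf x⟩)
  · exact Module.Projective.of_split f g (LinearMap.ext hgf)

theorem projective_pi_fintype {R0 : Type u} [Ring R0] {ι : Type} [Fintype ι] [DecidableEq ι]
    (M : ι → Type u) [∀ i, AddCommGroup (M i)] [∀ i, Module R0 (M i)]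
    (h : ∀ i, Module.Projective R0 (M i)) : Module.Projective R0 (∀ i, M i) := by
  haveI := h
  haveI : Module.Projective R0 (⨁ i, M i) := inferInstanceAs (Module.Projective R0 (Π₀ i, M i))
  exact Module.Projective.of_equiv (DirectSum.linearEquivFunOnFintype R0 ι M)

/-- Projection of `T_n` onto the finitely many graded pieces in degrees `[-n, -m)`. -/
noncomputable def psiMap (m n : ℤ) :
    ↥(trunc 𝒜 n) →ₗ[↥(gradeZeroSubring 𝒜)]
      (∀ d : ↥(Finset.Ico (-n) (-m)), ↥(gradeSubmodule 𝒜 (d : ℤ))) where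
  toFun x := fun d => ⟨(DirectSum.decompose 𝒜 (x : R) (d : ℤ) : R), SetLike.coe_mem _⟩
  map_add' := by
    intro x y; funext d; apply Subtype.ext
    show (DirectSum.decompose 𝒜 ((x : R) + (y : R)) (d : ℤ) : R) = _
    rw [DirectSum.decompose_add]
    rfl
  map_smul' := by
    intro c x; funext d; apply Subtype.ext
    show (DirectSum.decompose 𝒜 ((c : R) * (x : R)) (d : ℤ) : R)
      = (c : R) * (DirectSum.decompose 𝒜 (x : R) (d : ℤ) : R)
    exact decompose_grade_zero_mul 𝒜 c _ _

theorem psiMap_surjective (m n : ℤ) : Function.Surjective (psiMap 𝒜 m n) := by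
  intro c
  refine ⟨⟨∑ d, (c d : R), ?_⟩, ?_⟩
  · intro i hi
    rw [← comp'_apply, map_sum]
    refine Finset.sum_eq_zero ?_
    intro d _
    rw [comp'_apply]
    refine DirectSum.decompose_of_mem_ne 𝒜 (show ((c d : R)) ∈ 𝒜 (d : ℤ) from (c d).2) ?_
    have hd := Finset.mem_Ico.mp d.2
    omega
  · funext d
    apply Subtype.ext
    show (DirectSum.decompose 𝒜 (∑ e, (c e : R)) (d : ℤ) : R) = (c d : R)
    rw [← comp'_apply, map_sum]
    rw [Finset.sum_eq_single_of_mem d (Finset.mem_univ d)]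
    · rw [comp'_apply]
      exact DirectSum.decompose_of_mem_same 𝒜 (c d).2
    · intro e _ he
      rw [comp'_apply]
      exact DirectSum.decompose_of_mem_ne 𝒜 (show ((c e : R)) ∈ 𝒜 (e : ℤ) from (c e).2)
        (fun h => he (Subtype.ext h))

theorem ker_psiMap (m n : ℤ) (hmn : m < n) :
    LinearMap.ker (psiMap 𝒜 m n) = (trunc 𝒜 m).comap (trunc 𝒜 n).subtype := by
  ext x
  constructor
  · intro h
    intro i hi
    by_cases hin : i < -n
    · exact x.2 i hin
    · have hmem : i ∈ Finset.Ico (-n) (-m) := Finset.mem_Ico.mpr ⟨by omega, hi⟩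
      have h2 := congrFun (LinearMap.mem_ker.mp h) ⟨i, hmem⟩
      exact congrArg Subtype.val h2
  · intro h
    rw [LinearMap.mem_ker]
    funext d
    apply Subtype.ext
    show (DirectSum.decompose 𝒜 (x : R) (d : ℤ) : R) = 0
    exact h (d : ℤ) (Finset.mem_Ico.mp d.2).2

theorem truncQuot_finite_projective (hstrong : ∀ n : ℤ, HasPartitionOfUnity 𝒜 n)
    (m n : ℤ) (hmn : m < n) :
    Module.Finite ↥(gradeZeroSubring 𝒜)
        (↥(trunc 𝒜 n) ⧸ (trunc 𝒜 m).comap (trunc 𝒜 n).subtype) ∧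
      Module.Projective ↥(gradeZeroSubring 𝒜)
        (↥(trunc 𝒜 n) ⧸ (trunc 𝒜 m).comap (trunc 𝒜 n).subtype) := by
  classical
  let e : (↥(trunc 𝒜 n) ⧸ (trunc 𝒜 m).comap (trunc 𝒜 n).subtype) ≃ₗ[↥(gradeZeroSubring 𝒜)]
      (∀ d : ↥(Finset.Ico (-n) (-m)), ↥(gradeSubmodule 𝒜 (d : ℤ))) :=
    (Submodule.quotEquivOfEq _ _ (ker_psiMap 𝒜 m n hmn).symm).trans
      ((psiMap 𝒜 m n).quotKerEquivOfSurjective (psiMap_surjective 𝒜 m n))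
  constructor
  · haveI : ∀ d : ↥(Finset.Ico (-n) (-m)),
        Module.Finite ↥(gradeZeroSubring 𝒜) ↥(gradeSubmodule 𝒜 (d : ℤ)) :=
      fun d => (grade_finite_projective 𝒜 hstrong _).1
    exact Module.Finite.equiv e.symm
  · haveI := projective_pi_fintype (ι := ↥(Finset.Ico (-n) (-m)))
      (fun d => ↥(gradeSubmodule 𝒜 (d : ℤ)))
      (fun d => (grade_finite_projective 𝒜 hstrong ((d : ℤ))).2)
    exact Module.Projective.of_equiv e.symm

end Aux

section Abstract

theorem fgproj_iff_of_ses {R0 : Type u} [Ring R0] {M N Q : Type u}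
    [AddCommGroup M] [AddCommGroup N] [AddCommGroup Q]
    [Module R0 M] [Module R0 N] [Module R0 Q]
    (hQf : Module.Finite R0 Q) (hQp : Module.Projective R0 Q)
    (ι : M →ₗ[R0] N) (π : N →ₗ[R0] Q) (hπ : Function.Surjective π)
    (hinj : Function.Injective ι) (hrk : LinearMap.range ι = LinearMap.ker π) :
    (Module.Finite R0 N ∧ Module.Projective R0 N) ↔
      (Module.Finite R0 M ∧ Module.Projective R0 M) := by
  haveI := hQf; haveI := hQp
  obtain ⟨s, hs⟩ := Module.projective_lifting_property π LinearMap.id hπ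
  have hs' : ∀ q, π (s q) = q := fun q => DFunLike.congr_fun hs q
  have hπι : ∀ a, π (ι a) = 0 := by
    intro a
    have h : ι a ∈ LinearMap.ker π := hrk ▸ LinearMap.mem_range_self ι a
    exact h
  let e0 : (M × Q) →ₗ[R0] N := ι.coprod s
  have he0 : ∀ a q, e0 (a, q) = ι a + s q := fun a q => rfl
  have hbij : Function.Bijective e0 := by
    constructor
    · rintro ⟨a, q⟩ ⟨b, r⟩ h
      rw [he0, he0] at h
      have hq : q = r := by
        have h2 := congrArg π h
        simpa [hπι, hs'] using h2
      subst hq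
      have h3 : ι a = ι b := add_right_cancel h
      exact Prod.ext (hinj h3) rfl
    · intro x
      have hker : x - s (π x) ∈ LinearMap.ker π := by
        simp [hs']
      rw [← hrk] at hker
      obtain ⟨a, ha⟩ := hker
      refine ⟨(a, π x), ?_⟩
      rw [he0, ha]
      abel
  let e := LinearEquiv.ofBijective e0 hbij
  have he : ∀ a q, e (a, q) = ι a + s q := fun a q => rfl
  constructor
  · rintro ⟨hNf, hNp⟩
    haveI := hNf; haveI := hNp
    let r : N →ₗ[R0] M := (LinearMap.fst R0 M Q) ∘ₗ (e.symm : N →ₗ[R0] (M × Q))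
    have hr : ∀ a, r (ι a) = a := by
      intro a
      have h1 : e (a, 0) = ι a := by rw [he]; simp
      have h2 : e.symm (ι a) = (a, 0) := by rw [← h1, LinearEquiv.symm_apply_apply]
      show (e.symm (ι a)).1 = a
      rw [h2]
    exact ⟨Module.Finite.of_surjective r (fun a => ⟨ι a, hr a⟩),
      Module.Projective.of_split ι r (LinearMap.ext hr)⟩
  · rintro ⟨hMf, hMp⟩
    haveI := hMf; haveI := hMp
    exact ⟨Module.Finite.equiv e, Module.Projective.of_equiv e⟩

end Abstract


set_option maxHeartbeats 2000000 in
/-- **Corollary.**  Let `R` be a strongly `ℤ`-graded ring, `A` a `k × k` matrix over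
`R`, `m` suitable for `A`, and `n > m`.  Then `coker μ(A,n)` is a finitely generated
projective `R₀`-module if and only if `coker μ(A,m)` is. -/
theorem coker_muMap_fg_projective_iff {R : Type u} [Ring R]
    (𝒜 : ℤ → AddSubgroup R) [GradedRing 𝒜]
    (hstrong : ∀ n : ℤ, HasPartitionOfUnity 𝒜 n)
    (k : ℕ) (A : Matrix (Fin k) (Fin k) R) (m n : ℤ) (hmn : m < n)
    (hA : ∀ i j, A i j ∈ trunc 𝒜 m) :
    (Module.Finite ↥(gradeZeroSubring 𝒜)
        ((Fin k → ↥(trunc 𝒜 n)) ⧸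
          LinearMap.range (muMap 𝒜 k A n (fun i j e he => hA i j e (by omega)))) ∧
      Module.Projective ↥(gradeZeroSubring 𝒜)
        ((Fin k → ↥(trunc 𝒜 n)) ⧸
          LinearMap.range (muMap 𝒜 k A n (fun i j e he => hA i j e (by omega))))) ↔
    (Module.Finite ↥(gradeZeroSubring 𝒜)
        ((Fin k → ↥(trunc 𝒜 m)) ⧸ LinearMap.range (muMap 𝒜 k A m hA)) ∧
      Module.Projective ↥(gradeZeroSubring 𝒜)
        ((Fin k → ↥(trunc 𝒜 m)) ⧸ LinearMap.range (muMap 𝒜 k A m hA))) := by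
    classical
  have hA' : ∀ i j, A i j ∈ trunc 𝒜 n := fun i j e he => hA i j e (by omega)
  let Tm' : Submodule ↥(gradeZeroSubring 𝒜) ↥(trunc 𝒜 n) :=
    (trunc 𝒜 m).comap (trunc 𝒜 n).subtype
  let S : Submodule ↥(gradeZeroSubring 𝒜) (Fin k → ↥(trunc 𝒜 n)) :=
    Submodule.pi Set.univ (fun _ => Tm')
  let L := LinearMap.range (muMap 𝒜 k A n hA')
  have hmu_coe : ∀ (v : Fin k → ↥(trunc 𝒜 0)) (j : Fin k),
      ((muMap 𝒜 k A n hA' v j : R)) = ∑ i, (v i : R) * A i j := fun v j => rfl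
  have hrow : ∀ (v : Fin k → ↥(trunc 𝒜 0)) (j : Fin k),
      ((muMap 𝒜 k A n hA' v j : R)) ∈ trunc 𝒜 m := by
    intro v j
    rw [hmu_coe]
    intro d hd
    rw [← comp'_apply, map_sum]
    refine Finset.sum_eq_zero fun i _ => ?_
    rw [comp'_apply]
    exact decompose_mul_vanish 𝒜 (c := 0) (d := -m)
      (fun e he => (v i).2 e (by omega)) (hA i j) d (by omega)
  have hLS : L ≤ S := by
    rintro x ⟨v, rfl⟩
    rw [Submodule.mem_pi]
    intro j _
    rw [Submodule.mem_comap]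
    exact hrow v j
  let π : ((Fin k → ↥(trunc 𝒜 n)) ⧸ L) →ₗ[↥(gradeZeroSubring 𝒜)]
      ((Fin k → ↥(trunc 𝒜 n)) ⧸ S) :=
    Submodule.mapQ L S LinearMap.id (fun x hx => hLS hx)
  have hπsurj : Function.Surjective π := by
    intro y
    obtain ⟨x, rfl⟩ := Submodule.mkQ_surjective S y
    exact ⟨L.mkQ x, rfl⟩
  let φ : (Fin k → ↥(trunc 𝒜 m)) →ₗ[↥(gradeZeroSubring 𝒜)] (Fin k → ↥(trunc 𝒜 n)) :=
  { toFun := fun v i => ⟨(v i : R), fun e he => (v i).2 e (by omega)⟩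
    map_add' := fun v w => rfl
    map_smul' := fun c v => rfl }
  have hφmu : ∀ v, φ (muMap 𝒜 k A m hA v) = muMap 𝒜 k A n hA' v := by
    intro v
    funext j
    apply Subtype.ext
    rfl
  have hφmem : ∀ v, φ v ∈ S := by
    intro v
    rw [Submodule.mem_pi]
    intro j _
    rw [Submodule.mem_comap]
    exact fun e he => (v j).2 e (by omega)
  let ι : ((Fin k → ↥(trunc 𝒜 m)) ⧸ LinearMap.range (muMap 𝒜 k A m hA))
      →ₗ[↥(gradeZeroSubring 𝒜)] ((Fin k → ↥(trunc 𝒜 n)) ⧸ L) :=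
    Submodule.mapQ _ _ φ (by
      rintro x ⟨v, rfl⟩
      show φ (muMap 𝒜 k A m hA v) ∈ L
      rw [hφmu]
      exact LinearMap.mem_range_self _ v)
  have hφinj : Function.Injective φ := by
    intro v w h
    funext i
    apply Subtype.ext
    exact congrArg (fun u : Fin k → ↥(trunc 𝒜 n) => ((u i : R))) h
  have hιmk : ∀ v, ι (Submodule.Quotient.mk v) = Submodule.Quotient.mk (φ v) :=
    fun v => rfl
  have hπmk : ∀ w, π (Submodule.Quotient.mk w) = Submodule.Quotient.mk w :=
    fun w => rfl
  have hιinj : Function.Injective ι := by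
    intro x y h
    obtain ⟨v, rfl⟩ := Submodule.mkQ_surjective _ x
    obtain ⟨w, rfl⟩ := Submodule.mkQ_surjective _ y
    simp only [Submodule.mkQ_apply] at h ⊢
    rw [hιmk, hιmk, Submodule.Quotient.eq, ← map_sub] at h
    obtain ⟨u, hu⟩ := h
    rw [← hφmu u] at hu
    rw [Submodule.Quotient.eq]
    exact ⟨u, hφinj hu⟩
  have hrange : LinearMap.range ι = LinearMap.ker π := by
    ext x
    constructor
    · rintro ⟨y, rfl⟩
      obtain ⟨v, rfl⟩ := Submodule.mkQ_surjective _ y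
      rw [LinearMap.mem_ker, Submodule.mkQ_apply, hιmk, hπmk,
        Submodule.Quotient.mk_eq_zero]
      exact hφmem v
    · intro hx
      obtain ⟨w, rfl⟩ := Submodule.mkQ_surjective _ x
      rw [LinearMap.mem_ker, Submodule.mkQ_apply, hπmk,
        Submodule.Quotient.mk_eq_zero] at hx
      have hw : ∀ i : Fin k, (w i : R) ∈ trunc 𝒜 m := by
        intro i
        have := (Submodule.mem_pi.mp hx) i (Set.mem_univ i)
        exact Submodule.mem_comap.mp this
      refine ⟨Submodule.Quotient.mk (fun i => (⟨(w i : R), hw i⟩ : ↥(trunc 𝒜 m))), ?_⟩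
      rw [hιmk, Submodule.mkQ_apply]
      have hfw : φ (fun i => (⟨(w i : R), hw i⟩ : ↥(trunc 𝒜 m))) = w :=
        funext fun i => Subtype.ext rfl
      rw [hfw]
  let Ψ : (Fin k → ↥(trunc 𝒜 n)) →ₗ[↥(gradeZeroSubring 𝒜)]
      (Fin k → ∀ d : ↥(Finset.Ico (-n) (-m)), ↥(gradeSubmodule 𝒜 (d : ℤ))) :=
    LinearMap.pi (fun j => (psiMap 𝒜 m n).comp (LinearMap.proj j))
  have hΨsurj : Function.Surjective Ψ := by
    intro c
    choose x hx using fun j => psiMap_surjective 𝒜 m n (c j)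
    exact ⟨x, funext hx⟩
  have hkerΨ : LinearMap.ker Ψ = S := by
    ext x
    constructor
    · intro hx
      rw [Submodule.mem_pi]
      intro j _
      have h1 : psiMap 𝒜 m n (x j) = 0 := congrFun (LinearMap.mem_ker.mp hx) j
      have h2 : x j ∈ LinearMap.ker (psiMap 𝒜 m n) := h1
      rw [ker_psiMap 𝒜 m n hmn] at h2
      exact h2
    · intro hx
      rw [LinearMap.mem_ker]
      funext j
      have h2 : x j ∈ LinearMap.ker (psiMap 𝒜 m n) := by
        rw [ker_psiMap 𝒜 m n hmn]
        exact (Submodule.mem_pi.mp hx) j (Set.mem_univ j)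
      exact h2
  let eS : ((Fin k → ↥(trunc 𝒜 n)) ⧸ S) ≃ₗ[↥(gradeZeroSubring 𝒜)]
      (Fin k → ∀ d : ↥(Finset.Ico (-n) (-m)), ↥(gradeSubmodule 𝒜 (d : ℤ))) :=
    (Submodule.quotEquivOfEq S (LinearMap.ker Ψ) hkerΨ.symm).trans
      (Ψ.quotKerEquivOfSurjective hΨsurj)
  have hQf : Module.Finite ↥(gradeZeroSubring 𝒜) ((Fin k → ↥(trunc 𝒜 n)) ⧸ S) := by
    haveI : ∀ d : ↥(Finset.Ico (-n) (-m)),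
        Module.Finite ↥(gradeZeroSubring 𝒜) ↥(gradeSubmodule 𝒜 (d : ℤ)) :=
      fun d => (grade_finite_projective 𝒜 hstrong _).1
    exact Module.Finite.equiv eS.symm
  have hQp : Module.Projective ↥(gradeZeroSubring 𝒜) ((Fin k → ↥(trunc 𝒜 n)) ⧸ S) := by
    have hinner : Module.Projective ↥(gradeZeroSubring 𝒜)
        (∀ d : ↥(Finset.Ico (-n) (-m)), ↥(gradeSubmodule 𝒜 (d : ℤ))) :=
      projective_pi_fintype (ι := ↥(Finset.Ico (-n) (-m)))
        (fun d => ↥(gradeSubmodule 𝒜 (d : ℤ)))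
        (fun d => (grade_finite_projective 𝒜 hstrong ((d : ℤ))).2)
    haveI := projective_pi_fintype (ι := Fin k)
      (fun _ => ∀ d : ↥(Finset.Ico (-n) (-m)), ↥(gradeSubmodule 𝒜 (d : ℤ)))
      (fun _ => hinner)
    exact Module.Projective.of_equiv eS.symm
  exact fgproj_iff_of_ses hQf hQp ι π hπsurj hιinj hrange
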